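/- Under the singular-B setup below, a matrix X ∈ ℝ^{d×r} satisfies A X = B X (Xᵀ A X) and Xᵀ B X = I_r if and only if, writing (O^B)ᵀ X = [x₁; x₂] with x₁ ∈ ℝ^{m×r} and x₂ ∈ ℝ^{(d−m)×r}, one has x₂ = −W₂₂^{-1} W₂₁ x₁ and the matrix V₁ = Λ₁₁^{1/2} x₁ satisfies V₁ᵀ V₁ = I_r and Â V₁ = V₁ (V₁ᵀ Â V₁). -/

import Mathlib

open Matrix

/-- Singular-`B` setup: `B = O^B diag(Λ₁₁, 0) (O^B)ᵀ` with `Λ₁₁`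
positive diagonal of size `m`, `W = (O^B)ᵀ A O^B` with invertible block `W₂₂`, and
`Â = Λ₁₁^{-1/2}(W₁₁ − W₁₂ W₂₂⁻¹ W₂₁)Λ₁₁^{-1/2}`.  A matrix `X` satisfies
`A X = B X (Xᵀ A X)` and `Xᵀ B X = I_r` if and only if, writing `(O^B)ᵀ X = [x₁; x₂]`,
one has `x₂ = −W₂₂⁻¹ W₂₁ x₁` and `V₁ = Λ₁₁^{1/2} x₁` satisfies `V₁ᵀ V₁ = I_r` and
`Â V₁ = V₁ (V₁ᵀ Â V₁)`.  The ambient index set `{1,…,d}` is encoded as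
`Fin m ⊕ Fin (d − m)`. -/
theorem gev_singular_equilibrium_reduction
    (d r m : ℕ) (hd : 1 ≤ d) (hr : 1 ≤ r) (hrm : r ≤ m) (hmd : m < d)
    (A B : Matrix (Fin m ⊕ Fin (d - m)) (Fin m ⊕ Fin (d - m)) ℝ)
    (hA : Aᵀ = A) (hAinv : IsUnit A.det) (hB : B.PosSemidef)
    (OB : Matrix (Fin m ⊕ Fin (d - m)) (Fin m ⊕ Fin (d - m)) ℝ)
    (hOB : OBᵀ * OB = 1)
    (μ : Fin m → ℝ) (hμ : ∀ i, 0 < μ i)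
    (hBdec : B = OB * Matrix.fromBlocks (diagonal μ) 0 0 0 * OBᵀ)
    (W : Matrix (Fin m ⊕ Fin (d - m)) (Fin m ⊕ Fin (d - m)) ℝ)
    (hW : W = OBᵀ * A * OB)
    (hW22 : IsUnit W.toBlocks₂₂.det)
    (Ahat : Matrix (Fin m) (Fin m) ℝ)
    (hAhat : Ahat = diagonal (fun i => (Real.sqrt (μ i))⁻¹) *
        (W.toBlocks₁₁ - W.toBlocks₁₂ * W.toBlocks₂₂⁻¹ * W.toBlocks₂₁) *
        diagonal (fun i => (Real.sqrt (μ i))⁻¹))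
    (X : Matrix (Fin m ⊕ Fin (d - m)) (Fin r) ℝ)
    (x₁ : Matrix (Fin m) (Fin r) ℝ) (hx₁ : x₁ = (OBᵀ * X).toRows₁)
    (x₂ : Matrix (Fin (d - m)) (Fin r) ℝ) (hx₂ : x₂ = (OBᵀ * X).toRows₂)
    (V₁ : Matrix (Fin m) (Fin r) ℝ)
    (hV₁ : V₁ = diagonal (fun i => Real.sqrt (μ i)) * x₁) :
    (A * X = B * X * (Xᵀ * A * X) ∧ Xᵀ * B * X = 1) ↔
      (x₂ = -(W.toBlocks₂₂⁻¹ * W.toBlocks₂₁ * x₁) ∧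
        V₁ᵀ * V₁ = 1 ∧ Ahat * V₁ = V₁ * (V₁ᵀ * Ahat * V₁)) := by
  have hOB' : OB * OBᵀ = 1 := mul_eq_one_comm.mp hOB
  set D := diagonal μ with hDdef
  set Dh := diagonal (fun i => Real.sqrt (μ i)) with hDhdef
  set Dhi := diagonal (fun i => (Real.sqrt (μ i))⁻¹) with hDhidef
  have hsqrt_ne : ∀ i, Real.sqrt (μ i) ≠ 0 := fun i =>
    ne_of_gt (Real.sqrt_pos.mpr (hμ i))
  have hDhDhi : Dh * Dhi = 1 := by
    have h : (fun i => Real.sqrt (μ i) * (Real.sqrt (μ i))⁻¹) = fun _ => (1 : ℝ) :=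
      funext fun i => mul_inv_cancel₀ (hsqrt_ne i)
    rw [hDhdef, hDhidef, diagonal_mul_diagonal, h, diagonal_one]
  have hDhiDh : Dhi * Dh = 1 := by
    have h : (fun i => (Real.sqrt (μ i))⁻¹ * Real.sqrt (μ i)) = fun _ => (1 : ℝ) :=
      funext fun i => inv_mul_cancel₀ (hsqrt_ne i)
    rw [hDhdef, hDhidef, diagonal_mul_diagonal, h, diagonal_one]
  have hDhDh : Dh * Dh = D := by
    have h : (fun i => Real.sqrt (μ i) * Real.sqrt (μ i)) = μ :=
      funext fun i => Real.mul_self_sqrt (hμ i).le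
    rw [hDhdef, hDdef, diagonal_mul_diagonal, h]
  have hDhiD : Dhi * D = Dh := by
    have h : (fun i => (Real.sqrt (μ i))⁻¹ * μ i) = fun i => Real.sqrt (μ i) := by
      funext i
      field_simp
      rw [div_eq_iff (hsqrt_ne i), Real.mul_self_sqrt (hμ i).le]
    rw [hDhidef, hDdef, diagonal_mul_diagonal, h, hDhdef]
  have hDht : Dhᵀ = Dh := by rw [hDhdef, diagonal_transpose]
  set W11 := W.toBlocks₁₁ with hW11def
  set W12 := W.toBlocks₁₂ with hW12def
  set W21 := W.toBlocks₂₁ with hW21def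
  set W22 := W.toBlocks₂₂ with hW22def
  have hWb : W = fromBlocks W11 W12 W21 W22 := (fromBlocks_toBlocks W).symm
  have hW22i : W22⁻¹ * W22 = 1 := nonsing_inv_mul _ hW22
  have hW22i' : W22 * W22⁻¹ = 1 := mul_nonsing_inv _ hW22
  set S := W11 - W12 * W22⁻¹ * W21 with hSdef
  set F := fromBlocks D 0 0 0 with hFdef
  set Y := fromRows x₁ x₂ with hYdef
  have hYX : Y = OBᵀ * X := by rw [hYdef, hx₁, hx₂, fromRows_toRows]
  have hXY : X = OB * Y := by rw [hYX, ← Matrix.mul_assoc, hOB', Matrix.one_mul]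
  have hcan : ∀ M N : Matrix (Fin m ⊕ Fin (d - m)) (Fin r) ℝ,
      (OBᵀ * M = OBᵀ * N) ↔ M = N := by
    intro M N
    constructor
    · intro h
      have h2 := congrArg (fun Z => OB * Z) h
      simpa [← Matrix.mul_assoc, hOB'] using h2
    · intro h; rw [h]
  have hOBBOB : OBᵀ * B * OB = F := by
    rw [hBdec]
    simp only [Matrix.mul_assoc]
    rw [hOB, Matrix.mul_one, ← Matrix.mul_assoc, hOB, Matrix.one_mul]
  have hC : Xᵀ * A * X = Yᵀ * W * Y := by
    rw [hXY, hW]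
    simp only [transpose_mul, Matrix.mul_assoc]
  have e1 : OBᵀ * (A * X) = W * Y := by
    rw [hW, hXY]
    simp only [Matrix.mul_assoc]
  have e2 : OBᵀ * (B * X * (Xᵀ * A * X)) = F * Y * (Yᵀ * W * Y) := by
    rw [hC, ← hOBBOB, hXY]
    simp only [Matrix.mul_assoc]
  have key1 : (A * X = B * X * (Xᵀ * A * X)) ↔ W * Y = F * Y * (Yᵀ * W * Y) := by
    constructor
    · intro h
      rw [← e1, ← e2, h]
    · intro h
      exact (hcan _ _).mp (by rw [e1, e2, h])
  have hWY : W * Y = fromRows (W11 * x₁ + W12 * x₂) (W21 * x₁ + W22 * x₂) := by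
    rw [hWb, hYdef, fromBlocks_mul_fromRows]
  have hFYC : ∀ C : Matrix (Fin r) (Fin r) ℝ,
      F * Y * C = fromRows (D * x₁ * C) 0 := by
    intro C
    rw [hFdef, hYdef, fromBlocks_mul_fromRows]
    simp [fromRows_mul, Matrix.mul_assoc]
  have hYFY : Yᵀ * F * Y = x₁ᵀ * D * x₁ := by
    rw [hYdef, hFdef, transpose_fromRows, fromCols_mul_fromBlocks,
      fromCols_mul_fromRows]
    simp [Matrix.mul_assoc]
  have hXBX : Xᵀ * B * X = V₁ᵀ * V₁ := by
    have h1 : Xᵀ * B * X = Yᵀ * F * Y := by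
      rw [← hOBBOB, hXY]
      simp only [transpose_mul, Matrix.mul_assoc]
    rw [h1, hYFY, hV₁, ← hDhDh]
    simp only [transpose_mul, hDht, Matrix.mul_assoc]
  have hP2Q2 : (W21 * x₁ + W22 * x₂ = 0) ↔ x₂ = -(W22⁻¹ * W21 * x₁) := by
    constructor
    · intro h
      have h2 : W22 * x₂ = -(W21 * x₁) := by
        rw [add_comm] at h
        exact eq_neg_of_add_eq_zero_left h
      calc x₂ = (W22⁻¹ * W22) * x₂ := by rw [hW22i, Matrix.one_mul]
        _ = W22⁻¹ * (W22 * x₂) := by rw [Matrix.mul_assoc]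
        _ = W22⁻¹ * (-(W21 * x₁)) := by rw [h2]
        _ = -(W22⁻¹ * W21 * x₁) := by rw [Matrix.mul_neg, Matrix.mul_assoc]
    · intro h
      rw [h, Matrix.mul_neg, ← Matrix.mul_assoc, ← Matrix.mul_assoc, hW22i',
        Matrix.one_mul]
      simp
  have hSx : x₂ = -(W22⁻¹ * W21 * x₁) → W11 * x₁ + W12 * x₂ = S * x₁ := by
    intro h
    rw [h, hSdef, Matrix.sub_mul]
    simp only [Matrix.mul_neg, Matrix.mul_assoc]
    rw [sub_eq_add_neg]
  have hYWY : x₂ = -(W22⁻¹ * W21 * x₁) → Yᵀ * W * Y = x₁ᵀ * (S * x₁) := by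
    intro h
    rw [Matrix.mul_assoc, hWY, hYdef, transpose_fromRows, fromCols_mul_fromRows,
      hSx h, hP2Q2.mpr h, Matrix.mul_zero, add_zero, ← Matrix.mul_assoc,
      Matrix.mul_assoc]
  have hfirst : x₂ = -(W22⁻¹ * W21 * x₁) →
      ((W11 * x₁ + W12 * x₂ = D * x₁ * (Yᵀ * W * Y)) ↔
        Ahat * V₁ = V₁ * (V₁ᵀ * Ahat * V₁)) := by
    intro h
    rw [hSx h, hYWY h]
    have hAV : Ahat * V₁ = Dhi * (S * x₁) := by
      rw [hAhat, hV₁]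
      simp only [Matrix.mul_assoc]
      rw [← Matrix.mul_assoc Dhi Dh x₁, hDhiDh, Matrix.one_mul]
    have hVAV : V₁ᵀ * Ahat * V₁ = x₁ᵀ * (S * x₁) := by
      rw [hAhat, hV₁]
      simp only [transpose_mul, hDht, Matrix.mul_assoc]
      rw [← Matrix.mul_assoc Dhi Dh x₁, hDhiDh, Matrix.one_mul,
        ← Matrix.mul_assoc Dh Dhi (S * x₁), hDhDhi, Matrix.one_mul]
    have hVV : V₁ * (V₁ᵀ * Ahat * V₁) = Dh * (x₁ * (x₁ᵀ * (S * x₁))) := by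
      rw [hVAV, hV₁, Matrix.mul_assoc]
    rw [hAV, hVV]
    constructor
    · intro hh
      calc Dhi * (S * x₁) = Dhi * (D * x₁ * (x₁ᵀ * (S * x₁))) := by
            conv_lhs => rw [hh]
        _ = (Dhi * D) * (x₁ * (x₁ᵀ * (S * x₁))) := by simp only [Matrix.mul_assoc]
        _ = Dh * (x₁ * (x₁ᵀ * (S * x₁))) := by rw [hDhiD]
    · intro hh
      calc S * x₁ = (Dh * Dhi) * (S * x₁) := by rw [hDhDhi, Matrix.one_mul]
        _ = Dh * (Dhi * (S * x₁)) := by rw [Matrix.mul_assoc]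
        _ = Dh * (Dh * (x₁ * (x₁ᵀ * (S * x₁)))) := by rw [hh]
        _ = D * x₁ * (x₁ᵀ * (S * x₁)) := by
            rw [← hDhDh]; simp only [Matrix.mul_assoc]
  rw [key1, hXBX, hWY, hFYC, fromRows_ext_iff]
  constructor
  · rintro ⟨⟨p1, p2⟩, hv⟩
    have q2 := hP2Q2.mp p2
    exact ⟨q2, hv, (hfirst q2).mp p1⟩
  · rintro ⟨q2, hv, qh⟩
    exact ⟨⟨(hfirst q2).mpr qh, hP2Q2.mpr q2⟩, hv⟩
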